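/- Let G be a finite group acting 2-transitively and faithfully on a set with point stabilizer M, where M is non-normal in G. Then G is a setwise product of 3 conjugates of M, and γ_cp(G) = 3. -/
import Mathlib

open Pointwise

/-- The conjugate subgroup `A ^ g = g⁻¹ A g`. -/
def conjugate {G : Type*} [Group G] (A : Subgroup G) (g : G) : Subgroup G :=
  Subgroup.map (MulAut.conj g⁻¹).toMonoidHom A

/-- `G` is a product, in some order, of `k` pairwise conjugate proper subgroups. -/
def IsConjProdCover {G : Type*} [Group G] (k : ℕ) : Prop :=
  ∃ l : List (Subgroup G), l.length = k ∧ 2 ≤ l.length ∧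
    (∀ A ∈ l, A ≠ ⊤) ∧ (∀ A ∈ l, ∀ B ∈ l, ∃ g : G, B = conjugate A g) ∧
    (l.map (fun A => (A : Set G))).prod = Set.univ

/-- `γ_cp(G)`. -/
noncomputable def gammaCP (G : Type*) [Group G] : ℕ∞ :=
  sInf {k : ℕ∞ | ∃ n : ℕ, k = (n : ℕ∞) ∧ IsConjProdCover (G := G) n}

lemma mem_conjugate {G : Type*} [Group G] {A : Subgroup G} {g x : G} :
    x ∈ conjugate A g ↔ g * x * g⁻¹ ∈ A := by
  simp only [conjugate, Subgroup.mem_map, MulEquiv.coe_toMonoidHom, MulAut.conj_apply]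
  constructor
  · rintro ⟨b, hb, rfl⟩
    simpa [mul_assoc] using hb
  · intro h
    exact ⟨g * x * g⁻¹, h, by group⟩

lemma conjugate_one {G : Type*} [Group G] (A : Subgroup G) : conjugate A 1 = A := by
  ext x; simp [mem_conjugate]

lemma conjugate_conjugate {G : Type*} [Group G] (A : Subgroup G) (g h : G) :
    conjugate (conjugate A g) h = conjugate A (g * h) := by
  ext x; simp [mem_conjugate, mul_assoc]

lemma conjugate_top {G : Type*} [Group G] (g : G) : conjugate (⊤ : Subgroup G) g = ⊤ := by
  ext x; simp [mem_conjugate]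

lemma conjugate_ne_top {G : Type*} [Group G] {A : Subgroup G} (h : A ≠ ⊤) (g : G) :
    conjugate A g ≠ ⊤ := by
  intro hc
  apply h
  have := congrArg (fun B => conjugate B g⁻¹) hc
  simpa [conjugate_conjugate, conjugate_one, conjugate_top] using this

lemma conjugate_self {G : Type*} [Group G] {A : Subgroup G} {g : G} (hg : g ∈ A) :
    conjugate A g = A := by
  ext x
  rw [mem_conjugate]
  constructor
  · intro h
    have := A.mul_mem (A.mul_mem (A.inv_mem hg) h) hg
    simpa [mul_assoc] using this
  · intro h
    exact A.mul_mem (A.mul_mem hg h) (A.inv_mem hg)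

lemma coe_mul_self {G : Type*} [Group G] (A : Subgroup G) :
    (A : Set G) * (A : Set G) = (A : Set G) := by
  apply Set.Subset.antisymm
  · rintro x ⟨u, hu, v, hv, rfl⟩
    exact A.mul_mem hu hv
  · intro x hx
    exact ⟨x, hx, 1, A.one_mem, mul_one x⟩

lemma no_cover_two {G : Type*} [Group G] : ¬ IsConjProdCover (G := G) 2 := by
  rintro ⟨l, hlen, -, hne, hconj, hprod⟩
  match l, hlen with
  | [A, B], _ =>
    have hAmem : A ∈ [A, B] := by simp
    have hBmem : B ∈ [A, B] := by simp
    obtain ⟨g, hg⟩ := hconj A hAmem B hBmem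
    have hprod' : (A : Set G) * (B : Set G) = Set.univ := by
      simpa [mul_assoc] using hprod
    have hgmem : g ∈ (A : Set G) * (B : Set G) := by rw [hprod']; trivial
    obtain ⟨u, hu, v, hv, huv⟩ := hgmem
    have hv' : v ∈ conjugate A g := by rw [← hg]; exact hv
    rw [mem_conjugate] at hv'
    have hveq : v = u⁻¹ * g := by
      rw [eq_inv_mul_iff_mul_eq]
      exact huv
    have hginA : g ∈ A := by
      rw [hveq] at hv'
      have h1 : g * (u⁻¹ * g) * g⁻¹ = g * u⁻¹ := by group
      rw [h1] at hv'
      have := A.mul_mem hv' hu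
      simpa [mul_assoc] using this
    have hBA : B = A := by rw [hg, conjugate_self hginA]
    rw [hBA, coe_mul_self] at hprod'
    exact hne A hAmem (by rwa [← Subgroup.coe_eq_univ])

theorem stmt_10 {G : Type*} [Group G] [Finite G] {α : Type*} [MulAction G α]
    [FaithfulSMul G α]
    (h2trans : ∀ a b c d : α, a ≠ b → c ≠ d → ∃ g : G, g • a = c ∧ g • b = d)
    (a : α) (M : Subgroup G) (hM : M = MulAction.stabilizer G a)
    (hnn : ¬ M.Normal) :
    (∃ g₁ g₂ g₃ : G,
        ((conjugate M g₁ : Subgroup G) : Set G) * ((conjugate M g₂ : Subgroup G) : Set G) *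
          ((conjugate M g₃ : Subgroup G) : Set G) = Set.univ) ∧
      gammaCP G = 3 := by
  -- M is not top
  have hMtop : M ≠ ⊤ := by
    intro h
    subst h
    exact hnn inferInstance
  -- there is g with conjugate M g not ≤ M
  have hex : ∃ g : G, ¬ conjugate M g ≤ M := by
    by_contra h
    push_neg at h
    apply hnn
    constructor
    intro n hn g
    apply h g⁻¹
    rw [mem_conjugate]
    simpa [mul_assoc] using hn
  obtain ⟨g, hg⟩ := hex
  obtain ⟨m, hmC, hmM⟩ := SetLike.not_le_iff_exists.mp hg
  -- key double coset lemma
  have key : ∀ x y : G, x ∉ M → y ∉ M → ∃ u ∈ M, ∃ v ∈ M, x = u * y * v := by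
    intro x y hx hy
    rw [hM, MulAction.mem_stabilizer_iff] at hx hy
    obtain ⟨u, hu1, hu2⟩ := h2trans a (y • a) a (x • a) (fun h => hy h.symm) (fun h => hx h.symm)
    have huM : u ∈ M := by rw [hM, MulAction.mem_stabilizer_iff]; exact hu1
    refine ⟨u, huM, y⁻¹ * u⁻¹ * x, ?_, by group⟩
    rw [hM, MulAction.mem_stabilizer_iff]
    have : (y⁻¹ * u⁻¹ * x) • a = y⁻¹ • u⁻¹ • x • a := by
      rw [mul_smul, mul_smul]
    rw [this, ← hu2]
    simp
  -- the main product equality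
  have hP : (M : Set G) * ((conjugate M g : Subgroup G) : Set G) * (M : Set G) = Set.univ := by
    apply Set.eq_univ_of_forall
    intro x
    by_cases hx : x ∈ M
    · have h1 : (1 : G) ∈ ((conjugate M g : Subgroup G) : Set G) := (conjugate M g).one_mem
      have := Set.mul_mem_mul (Set.mul_mem_mul hx h1) M.one_mem
      simpa using this
    · obtain ⟨u, hu, v, hv, hx1⟩ := key x m hx hmM
      rw [hx1]
      exact Set.mul_mem_mul (Set.mul_mem_mul hu hmC) hv
  constructor
  · refine ⟨1, g, 1, ?_⟩
    rw [conjugate_one]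
    exact hP
  · -- gammaCP G = 3
    have h3 : IsConjProdCover (G := G) 3 := by
      refine ⟨[M, conjugate M g, M], rfl, by norm_num, ?_, ?_, ?_⟩
      · intro A hA
        simp only [List.mem_cons, List.not_mem_nil, or_false] at hA
        rcases hA with rfl | rfl | rfl
        · exact hMtop
        · exact conjugate_ne_top hMtop g
        · exact hMtop
      · intro A hA B hB
        simp only [List.mem_cons, List.not_mem_nil, or_false] at hA hB
        have c1 : ∃ k : G, M = conjugate M k := ⟨1, (conjugate_one M).symm⟩
        have c2 : ∃ k : G, conjugate M g = conjugate M k := ⟨g, rfl⟩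
        have c3 : ∃ k : G, M = conjugate (conjugate M g) k :=
          ⟨g⁻¹, by rw [conjugate_conjugate, mul_inv_cancel, conjugate_one]⟩
        have c4 : ∃ k : G, conjugate M g = conjugate (conjugate M g) k :=
          ⟨1, (conjugate_one _).symm⟩
        rcases hA with h | h | h <;> rcases hB with h' | h' | h' <;> rw [h, h'] <;>
          first | exact c1 | exact c2 | exact c3 | exact c4
      · simpa [mul_assoc] using hP
    apply le_antisymm
    · exact sInf_le ⟨3, rfl, h3⟩
    · apply le_sInf
      rintro k ⟨n, rfl, hn⟩
      have hn2 : 2 ≤ n := by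
        obtain ⟨l, hlen, h2l, -⟩ := hn
        exact hlen ▸ h2l
      have hne2 : n ≠ 2 := by
        rintro rfl
        exact no_cover_two hn
      have : 3 ≤ n := by omega
      exact_mod_cast this
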